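/- Every Tychonoff pseudocompact sequentially Ascoli space is selectively ω-bounded. -/

import Mathlib

open Filter Topology Set

def SelectivelyOmegaBounded (X : Type*) [TopologicalSpace X] : Prop :=
  ∀ U : ℕ → Set X, (∀ n, IsOpen (U n)) → (∀ n, (U n).Nonempty) →
    ∃ x : ℕ → X, (∀ n, x n ∈ U n) ∧
      ∃ φ : ℕ → ℕ, StrictMono φ ∧ IsCompact (closure (Set.range (x ∘ φ)))

def Pseudocompact (X : Type*) [TopologicalSpace X] : Prop :=
  ∀ f : C(X, ℝ), ∃ M : ℝ, ∀ x, |f x| ≤ M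

def EquicontinuousSet {X : Type*} [TopologicalSpace X] (S : Set C(X, ℝ)) : Prop :=
  Equicontinuous (fun f : S => ⇑(f : C(X, ℝ)))

def AscoliSpace (X : Type*) [TopologicalSpace X] : Prop :=
  ∀ S : Set C(X, ℝ), IsCompact S → EquicontinuousSet S

def SeqAscoliSpace (X : Type*) [TopologicalSpace X] : Prop :=
  ∀ (f : ℕ → C(X, ℝ)) (g : C(X, ℝ)), Tendsto f atTop (𝓝 g) →
    EquicontinuousSet (insert g (Set.range f))

theorem stmt11 (X : Type*) [TopologicalSpace X] [T35Space X]
    (hpc : Pseudocompact X) (hsa : SeqAscoliSpace X) :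
    SelectivelyOmegaBounded X := by
  classical
  intro U hUo hUne
  by_cases hexK : ∃ K : Set X, IsCompact K ∧ {n | (U n ∩ K).Nonempty}.Infinite
  · -- Case 1: some compact set meets infinitely many Uₙ
    obtain ⟨K, hKc, hinf⟩ := hexK
    choose x0 hx0 using hUne
    refine ⟨fun n => if h : (U n ∩ K).Nonempty then h.choose else x0 n, ?_,
      Nat.nth (fun n => (U n ∩ K).Nonempty), Nat.nth_strictMono hinf, ?_⟩
    · intro n
      by_cases h : (U n ∩ K).Nonempty
      · simp only [dif_pos h]
        exact h.choose_spec.1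
      · simp only [dif_neg h]
        exact hx0 n
    · have hsub : Set.range ((fun n => if h : (U n ∩ K).Nonempty then h.choose else x0 n) ∘
          Nat.nth (fun n => (U n ∩ K).Nonempty)) ⊆ K := by
        rintro _ ⟨k, rfl⟩
        have hp := Nat.nth_mem_of_infinite hinf k
        simp only [Function.comp_apply, dif_pos hp]
        exact hp.choose_spec.2
      exact hKc.of_isClosed_subset isClosed_closure
        (closure_minimal hsub hKc.isClosed)
  · -- Case 2: every compact set meets only finitely many Uₙ — derive a contradiction
    exfalso
    push_neg at hexK
    have hfin : ∀ K : Set X, IsCompact K → {n | (U n ∩ K).Nonempty}.Finite := by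
      intro K hK
      exact hexK K hK
    choose x hx using hUne
    -- build the Urysohn-type functions
    have hsep : ∀ n, ∃ f : X → unitInterval, Continuous f ∧ f (x n) = 0 ∧
        Set.EqOn f 1 (U n)ᶜ := fun n =>
      CompletelyRegularSpace.completely_regular (x n) (U n)ᶜ (hUo n).isClosed_compl
        (by simp [hx n])
    choose fI hfc hfx hfK using hsep
    set f0 : ℕ → C(X, ℝ) := fun n =>
      ⟨fun y => 1 - (fI n y : ℝ),
        continuous_const.sub (continuous_subtype_val.comp (hfc n))⟩ with hf0
    have hf0x : ∀ n, f0 n (x n) = 1 := by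
      intro n
      simp [hf0, hfx n]
    have hf0out : ∀ n y, y ∉ U n → f0 n y = 0 := by
      intro n y hy
      have : fI n y = 1 := hfK n hy
      simp [hf0, this]
    have hf0nonneg : ∀ n y, 0 ≤ f0 n y := by
      intro n y
      simp only [hf0, ContinuousMap.coe_mk, sub_nonneg]
      exact (fI n y).2.2
    -- f0 → 0 in the compact-open topology
    have htend : Tendsto f0 atTop (𝓝 (0 : C(X, ℝ))) := by
      rw [ContinuousMap.tendsto_iff_forall_isCompact_tendstoUniformlyOn]
      intro K hKc
      rw [Metric.tendstoUniformlyOn_iff]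
      intro ε hε
      have hev : ∀ᶠ n in (cofinite : Filter ℕ), n ∉ {n | (U n ∩ K).Nonempty} := by
        rw [Filter.eventually_cofinite]
        simpa using hfin K hKc
      rw [Nat.cofinite_eq_atTop] at hev
      filter_upwards [hev] with n hn y hy
      have hyU : y ∉ U n := fun hyU => hn ⟨y, hyU, hy⟩
      simp [hf0out n y hyU, hε]
    have hequi := hsa f0 0 htend
    -- the bump functions gₙ and the unbounded function F
    set g : ℕ → X → ℝ := fun n y => max (2 * f0 n y - 1) 0 with hg
    have hgcont : ∀ n, Continuous (g n) :=
      fun n => ((continuous_const.mul (f0 n).continuous).sub continuous_const).max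
        continuous_const
    have hgnonneg : ∀ n y, 0 ≤ g n y := fun n y => le_max_right _ _
    have hgout : ∀ n y, y ∉ U n → g n y = 0 := by
      intro n y hy
      simp only [hg]
      rw [hf0out n y hy]
      norm_num
    set F : X → ℝ := fun y => ∑' (n : ℕ), (n : ℝ) * g n y with hF
    -- at every point only finitely many terms are nonzero
    have hAfin : ∀ y : X, {n | y ∈ U n}.Finite := by
      intro y
      have := hfin {y} isCompact_singleton
      refine this.subset ?_
      intro n hn
      exact ⟨y, hn, rfl⟩
    have hterm0 : ∀ y : X, ∀ n ∉ (hAfin y).toFinset, (n : ℝ) * g n y = 0 := by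
      intro y n hn
      rw [Set.Finite.mem_toFinset] at hn
      rw [hgout n y hn, mul_zero]
    have hsummable : ∀ y : X, Summable (fun n : ℕ => (n : ℝ) * g n y) :=
      fun y => summable_of_ne_finset_zero (s := (hAfin y).toFinset) (hterm0 y)
    -- continuity of F via equicontinuity
    have hFcont : Continuous F := by
      rw [continuous_iff_continuousAt]
      intro z
      have hz := (Metric.equicontinuousAt_iff_right.mp (hequi z)) (1/4) (by norm_num)
      have hloc : F =ᶠ[𝓝 z] fun y => ∑ n ∈ (hAfin z).toFinset, (n : ℝ) * g n y := by
        filter_upwards [hz] with y hy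
        show (∑' (n : ℕ), (n : ℝ) * g n y) = _
        refine tsum_eq_sum ?_
        intro b hb
        rw [Set.Finite.mem_toFinset] at hb
        have hbz : f0 b z = 0 := hf0out b z hb
        have hd : dist (f0 b z) (f0 b y) < 1/4 :=
          hy ⟨f0 b, Set.mem_insert_of_mem _ (Set.mem_range_self b)⟩
        rw [hbz, Real.dist_eq] at hd
        have : f0 b y < 1/4 := by
          have := abs_lt.mp hd
          linarith [this.2]
        have hgy : g b y = 0 := by
          apply max_eq_right
          linarith
        rw [hgy, mul_zero]
      have hcs : ContinuousAt (fun y => ∑ n ∈ (hAfin z).toFinset, (n : ℝ) * g n y) z :=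
        (continuous_finset_sum _ (fun n _ => continuous_const.mul (hgcont n))).continuousAt
      exact hcs.congr (Filter.EventuallyEq.symm hloc)
    -- F is unbounded: F (x n) ≥ n
    have hFge : ∀ n : ℕ, (n : ℝ) ≤ F (x n) := by
      intro n
      have h1 : g n (x n) = 1 := by
        simp only [hg]
        rw [hf0x n]
        norm_num
      have := Summable.le_tsum (hsummable (x n)) n
        (fun j _ => mul_nonneg (Nat.cast_nonneg j) (hgnonneg j (x n)))
      rw [h1, mul_one] at this
      exact this
    obtain ⟨M, hM⟩ := hpc ⟨F, hFcont⟩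
    set n := ⌈M⌉₊ + 1
    have h1 : (n : ℝ) ≤ F (x n) := hFge n
    have h2 : F (x n) ≤ M := (le_abs_self _).trans (hM (x n))
    have h3 : M < (n : ℝ) := by
      have := Nat.le_ceil M
      show M < ((⌈M⌉₊ + 1 : ℕ) : ℝ)
      push_cast
      linarith
    linarith
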